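/- Let W be a symmetric n×n real matrix with nonnegative entries and zero diagonal whose row sums d_i = ∑_j w_ij are all positive, let D = Diag(W·1), let P = D^{-1}W, let t > 0, let 0 < α < 1, and let A = Diag(a) with a ∈ ℝⁿ having all entries positive. Then each of the three matrices S = (tA + L)^{-1} (where L = D − W), S = (I − αP)^{-1}, and S = (D − αW)^{-1} has all entries positive and produces a transitional measure on the graph G with adjacency matrix W: for all vertices i, j, k one has S_ij·S_jk ≤ S_ik·S_jj, with equality if and only if every path in G from i to k visits j (i.e., every finite sequence of vertices i = v₀, v₁, …, v_m = k with w_{v_l v_{l+1}} > 0 for all l contains j among its terms). -/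

import Mathlib

/-- A strictly positive matrix `S` produces a transitional measure on the graph with
weighted adjacency matrix `W` if `S i j * S j k ≤ S i k * S j j` for all vertices
`i, j, k`, with equality iff every path in the graph from `i` to `k` visits `j`.
Paths are represented as lists of vertices whose consecutive entries are joined by
edges of positive weight. -/
def ProducesTransitionalMeasure {n : ℕ} (W S : Matrix (Fin n) (Fin n) ℝ) : Prop :=
  (∀ i j : Fin n, 0 < S i j) ∧
  ∀ i j k : Fin n,
    S i j * S j k ≤ S i k * S j j ∧
    (S i j * S j k = S i k * S j j ↔
      ∀ p : List (Fin n), p.Chain' (fun u v => 0 < W u v) →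
        p.head? = some i → p.getLast? = some k → j ∈ p)

namespace TMaux

open Matrix Finset
open scoped NNReal

attribute [local instance] Matrix.linftyOpNormedAddCommGroup Matrix.linftyOpNormedRing
  Matrix.linftyOpNormedAlgebra

variable {n : ℕ}

lemma norm_lt_one_of_rows {N : Matrix (Fin n) (Fin n) ℝ}
    (h : ∀ i, ∑ v, |N i v| < 1) : ‖N‖ < 1 := by
  rw [Matrix.linfty_opNorm_def]
  rw [show (1:ℝ) = ((1:ℝ≥0):ℝ) by norm_num, NNReal.coe_lt_coe]
  refine (Finset.sup_lt_iff (by norm_num)).mpr fun i _ => ?_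
  have hi := h i
  rw [← NNReal.coe_lt_coe]
  push_cast
  simpa [Real.norm_eq_abs] using hi

lemma hasSum_entry {N : Matrix (Fin n) (Fin n) ℝ} (hN : ‖N‖ < 1) (i k : Fin n) :
    HasSum (fun m => (N ^ m) i k) ((∑' m, N ^ m) i k) := by
  have hs : HasSum (fun m : ℕ => N ^ m) (∑' m, N ^ m) :=
    (summable_geometric_of_norm_lt_one hN).hasSum
  let φ : Matrix (Fin n) (Fin n) ℝ →ₗ[ℝ] ℝ :=
    { toFun := fun M => M i k, map_add' := fun _ _ => rfl, map_smul' := fun _ _ => rfl }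
  exact hs.mapL (LinearMap.toContinuousLinearMap φ)


lemma chain'_of_chain' {α : Type*} {R S : α → α → Prop} (p : List α)
    (h : ∀ u ∈ p, ∀ v ∈ p, R u v → S u v) (hc : p.Chain' R) : p.Chain' S := by
  induction p with
  | nil => simp [List.Chain']
  | cons a t ih =>
    rcases t with _ | ⟨b, t⟩
    · simp [List.Chain']
    · unfold List.Chain' at hc ⊢; rw [List.isChain_cons_cons] at hc ⊢
      exact ⟨h a (by simp) b (by simp) hc.1,
        ih (fun u hu v hv => h u (by simp [hu]) v (by simp [hv])) hc.2⟩

lemma not_mem_of_chain' {α : Type*} {j k : α} {R : α → α → Prop} (hR : ∀ v, ¬ R j v)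
    (hk : k ≠ j) : ∀ p : List α, p.Chain' R → p.getLast? = some k → j ∉ p := by
  intro p
  induction p with
  | nil => simp
  | cons a t ih =>
    intro hc hl hm
    cases t with
    | nil =>
      simp only [List.getLast?_singleton, Option.some.injEq] at hl
      simp only [List.mem_singleton] at hm
      exact hk (by rw [← hl, ← hm])
    | cons b t' =>
      unfold List.Chain' at hc; rw [List.isChain_cons_cons] at hc
      have hl' : (b :: t').getLast? = some k := by rwa [List.getLast?_cons_cons] at hl
      rcases List.mem_cons.mp hm with h | h
      · exact hR b (h ▸ hc.1)
      · exact ih hc.2 hl' h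

lemma pow_entry_nonneg {N : Matrix (Fin n) (Fin n) ℝ} (h : ∀ i j, 0 ≤ N i j) (m : ℕ) :
    ∀ i k, 0 ≤ (N ^ m) i k := by
  induction m with
  | zero => intro i k; simp [Matrix.one_apply]; positivity
  | succ m ih =>
    intro i k
    rw [pow_succ, Matrix.mul_apply]
    exact Finset.sum_nonneg fun u _ => mul_nonneg (ih i u) (h u k)

lemma pow_entry_pos_iff {N : Matrix (Fin n) (Fin n) ℝ} (h : ∀ i j, 0 ≤ N i j) (m : ℕ) :
    ∀ i k, 0 < (N ^ m) i k ↔ ∃ p : List (Fin n), p.length = m + 1 ∧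
      p.Chain' (fun u v => 0 < N u v) ∧ p.head? = some i ∧ p.getLast? = some k := by
  induction m with
  | zero =>
    intro i k
    simp only [pow_zero, Matrix.one_apply]
    constructor
    · intro hik
      have : i = k := by by_contra hne; simp [hne] at hik
      exact ⟨[i], by simp [this, List.Chain']⟩
    · rintro ⟨p, hlen, _, hh, hl⟩
      rcases p with _ | ⟨a, t⟩
      · simp at hh
      · have : t = [] := by simpa using hlen
        subst this
        simp only [List.head?_cons, Option.some.injEq] at hh
        simp only [List.getLast?_singleton, Option.some.injEq] at hl
        simp [← hh, ← hl]
  | succ m ih =>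
    intro i k
    rw [pow_succ', Matrix.mul_apply]
    constructor
    · intro hpos
      have hex : ∃ u, 0 < N i u * (N ^ m) u k := by
        by_contra hno
        push_neg at hno
        have hz : ∑ u, N i u * (N ^ m) u k = 0 :=
          Finset.sum_eq_zero fun u _ =>
            le_antisymm (hno u) (mul_nonneg (h i u) (pow_entry_nonneg h m u k))
        rw [hz] at hpos; exact lt_irrefl _ hpos
      obtain ⟨u, hu⟩ := hex
      have h1 : 0 < N i u := by
        rcases (h i u).lt_or_eq with h' | h'
        · exact h'
        · rw [← h', zero_mul] at hu; exact absurd hu (lt_irrefl 0)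
      have h2 : 0 < (N ^ m) u k := by
        rcases (pow_entry_nonneg h m u k).lt_or_eq with h' | h'
        · exact h'
        · rw [← h', mul_zero] at hu; exact absurd hu (lt_irrefl 0)
      obtain ⟨p, hlen, hc, hh, hl⟩ := (ih u k).mp h2
      rcases p with _ | ⟨a, t⟩
      · simp at hh
      · simp only [List.head?_cons, Option.some.injEq] at hh
        refine ⟨i :: a :: t, by simpa using hlen, ?_, by simp, ?_⟩
        · unfold List.Chain'; rw [List.isChain_cons_cons]
          exact ⟨hh ▸ h1, hc⟩
        · rwa [List.getLast?_cons_cons]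
    · rintro ⟨p, hlen, hc, hh, hl⟩
      rcases p with _ | ⟨a, t⟩
      · simp at hh
      rcases t with _ | ⟨b, t'⟩
      · simp at hlen
      simp only [List.head?_cons, Option.some.injEq] at hh
      subst hh
      unfold List.Chain' at hc; rw [List.isChain_cons_cons] at hc
      have hl' : (b :: t').getLast? = some k := by rwa [List.getLast?_cons_cons] at hl
      have h2 : 0 < (N ^ m) b k :=
        (ih b k).mpr ⟨b :: t', by simpa using hlen, hc.2, by simp, hl'⟩
      refine Finset.sum_pos' (fun u _ => mul_nonneg (h a u) (pow_entry_nonneg h m u k)) ?_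
      exact ⟨b, Finset.mem_univ b, mul_pos hc.1 h2⟩

lemma ptm_mul_diag {W S : Matrix (Fin n) (Fin n) ℝ} (e : Fin n → ℝ) (he : ∀ i, 0 < e i)
    (h : ProducesTransitionalMeasure W S) :
    ProducesTransitionalMeasure W (S * Matrix.diagonal e) := by
  obtain ⟨h1, h2⟩ := h
  constructor
  · intro i k; rw [Matrix.mul_diagonal]; exact mul_pos (h1 i k) (he k)
  · intro i j k
    obtain ⟨hle, hiff⟩ := h2 i j k
    simp only [Matrix.mul_diagonal]
    have hejk : e j * e k ≠ 0 := (mul_pos (he j) (he k)).ne'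
    constructor
    · calc S i j * e j * (S j k * e k) = S i j * S j k * (e j * e k) := by ring
        _ ≤ S i k * S j j * (e j * e k) :=
            mul_le_mul_of_nonneg_right hle (mul_pos (he j) (he k)).le
        _ = S i k * e k * (S j j * e j) := by ring
    · rw [← hiff]
      constructor
      · intro hq
        apply mul_right_cancel₀ hejk
        linear_combination hq
      · intro hq
        linear_combination (e j * e k) * hq


/-- walk existence from pos entries, packaged -/
lemma exists_walk_iff {N : Matrix (Fin n) (Fin n) ℝ} (h : ∀ i j, 0 ≤ N i j) (i k : Fin n) :
    (∃ m, 0 < (N ^ m) i k) ↔ ∃ p : List (Fin n),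
      p.Chain' (fun u v => 0 < N u v) ∧ p.head? = some i ∧ p.getLast? = some k := by
  constructor
  · rintro ⟨m, hm⟩
    obtain ⟨p, _, hc, hh, hl⟩ := (pow_entry_pos_iff h m i k).mp hm
    exact ⟨p, hc, hh, hl⟩
  · rintro ⟨p, hc, hh, hl⟩
    have hne : p ≠ [] := by rintro rfl; simp at hh
    refine ⟨p.length - 1, (pow_entry_pos_iff h _ i k).mpr ⟨p, ?_, hc, hh, hl⟩⟩
    have := List.length_pos_iff.mpr hne
    omega

theorem core_ptm (W B : Matrix (Fin n) (Fin n) ℝ)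
    (hWedge : ∀ u v, 0 < B u v ↔ 0 < W u v) (hBnn : ∀ u v, 0 ≤ B u v)
    (c : Fin n → ℝ) (hc0 : ∀ i, 0 < c i) (hdom : ∀ i, ∑ v, B i v < c i)
    (hconn : ∀ i k : Fin n, ∃ p : List (Fin n),
      p.Chain' (fun u v => 0 < W u v) ∧ p.head? = some i ∧ p.getLast? = some k) :
    ProducesTransitionalMeasure W (Matrix.diagonal c - B)⁻¹ := by
  classical
  set Q : Matrix (Fin n) (Fin n) ℝ := Matrix.of fun u v => B u v / c u with hQdef
  have hQapp : ∀ u v, Q u v = B u v / c u := fun u v => rfl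
  have hQnn : ∀ u v, 0 ≤ Q u v := fun u v => div_nonneg (hBnn u v) (hc0 u).le
  have hQpos : ∀ u v, (0 < Q u v ↔ 0 < W u v) := by
    intro u v
    rw [← hWedge u v, hQapp]
    constructor
    · intro h'
      rcases div_pos_iff.mp h' with ⟨h1, _⟩ | ⟨_, h2⟩
      · exact h1
      · exact absurd h2 (not_lt.mpr (hc0 u).le)
    · intro h'; exact div_pos h' (hc0 u)
  have hrow : ∀ i, ∑ v, |Q i v| < 1 := by
    intro i
    have : ∑ v, |Q i v| = (∑ v, B i v) / c i := by
      rw [Finset.sum_div]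
      exact Finset.sum_congr rfl fun v _ => abs_of_nonneg (hQnn i v)
    rw [this]
    exact (div_lt_one (hc0 i)).mpr (hdom i)
  have hQlt : ‖Q‖ < 1 := norm_lt_one_of_rows hrow
  set G : Matrix (Fin n) (Fin n) ℝ := ∑' m, Q ^ m with hGdef
  have hGQ : G * (1 - Q) = 1 := geom_series_mul_neg Q hQlt
  have hQG : (1 - Q) * G = 1 := mul_neg_geom_series Q hQlt
  have hGsum : ∀ i k, HasSum (fun m => (Q ^ m) i k) (G i k) := fun i k => hasSum_entry hQlt i k
  have hGterm : ∀ m i k, (Q ^ m) i k ≤ G i k := fun m i k =>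
    le_hasSum (hGsum i k) m fun m' _ => pow_entry_nonneg hQnn m' i k
  have hGnn : ∀ i k, 0 ≤ G i k := fun i k => le_trans (by simp [Matrix.one_apply]; positivity)
    (hGterm 0 i k)
  have hGpos : ∀ i k, 0 < G i k := by
    intro i k
    obtain ⟨p, hc, hh, hl⟩ := hconn i k
    have hc' : p.Chain' (fun u v => 0 < Q u v) := chain'_of_chain' p
      (fun u _ v _ h' => (hQpos u v).mpr h') hc
    obtain ⟨m, hm⟩ := (exists_walk_iff hQnn i k).mpr ⟨p, hc', hh, hl⟩
    exact lt_of_lt_of_le hm (hGterm m i k)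
  have hGjj : ∀ j, (1:ℝ) ≤ G j j := by
    intro j
    have := hGterm 0 j j
    simpa [Matrix.one_apply] using this
  -- value of the inverse
  have hMdef : Matrix.diagonal c - B = Matrix.diagonal c * (1 - Q) := by
    ext u v
    have hcu : c u ≠ 0 := (hc0 u).ne'
    simp only [Matrix.sub_apply, Matrix.diagonal_mul, Matrix.one_apply, Matrix.diagonal_apply,
      Matrix.of_apply, mul_sub]
    congr 1
    · split <;> simp
    · rw [mul_comm]
      show B u v = B u v / c u * c u
      rw [div_mul_cancel₀ _ hcu]
  have hQinv : (1 - Q)⁻¹ = G := Matrix.inv_eq_left_inv hGQ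
  have hcinv : (Matrix.diagonal c)⁻¹ = Matrix.diagonal fun i => (c i)⁻¹ := by
    apply Matrix.inv_eq_right_inv
    rw [Matrix.diagonal_mul_diagonal]
    have h1 : (fun i => c i * (c i)⁻¹) = fun _ => (1:ℝ) :=
      funext fun i => mul_inv_cancel₀ (hc0 i).ne'
    rw [h1, Matrix.diagonal_one]
  have hSval : (Matrix.diagonal c - B)⁻¹ = G * Matrix.diagonal fun i => (c i)⁻¹ := by
    rw [hMdef, Matrix.mul_inv_rev, hQinv, hcinv]
  rw [hSval]
  apply ptm_mul_diag _ (fun i => inv_pos.mpr (hc0 i))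
  -- now prove the PTM for G itself
  constructor
  · exact hGpos
  · intro i j k
    -- the j-killed matrix
    set Qj : Matrix (Fin n) (Fin n) ℝ := Matrix.of fun u v => if u = j then 0 else Q u v
      with hQjdef
    have hQjapp : ∀ u v, Qj u v = if u = j then 0 else Q u v := fun u v => rfl
    have hQjnn : ∀ u v, 0 ≤ Qj u v := by
      intro u v
      rw [hQjapp]
      split
      · exact le_refl 0
      · exact hQnn u v
    have hQjlt : ‖Qj‖ < 1 := by
      apply norm_lt_one_of_rows
      intro u
      refine lt_of_le_of_lt (Finset.sum_le_sum fun v _ => ?_) (hrow u)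
      rw [hQjapp]
      split
      · simp
      · exact le_refl _
    set Gj : Matrix (Fin n) (Fin n) ℝ := ∑' m, Qj ^ m with hGjdef
    have hGjQ : Gj * (1 - Qj) = 1 := geom_series_mul_neg Qj hQjlt
    have hQjG : (1 - Qj) * Gj = 1 := mul_neg_geom_series Qj hQjlt
    have hGjsum : ∀ x y, HasSum (fun m => (Qj ^ m) x y) (Gj x y) := fun x y =>
      hasSum_entry hQjlt x y
    have hGjnn : ∀ x y, 0 ≤ Gj x y := fun x y =>
      hasSum_le (fun m => pow_entry_nonneg hQjnn m x y) hasSum_zero (hGjsum x y)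
    -- resolvent identity
    have hresM : G - Gj = Gj * ((Q - Qj) * G) := by
      have h1 : (Q - Qj : Matrix (Fin n) (Fin n) ℝ) = (1 - Qj) - (1 - Q) := by abel
      rw [h1, Matrix.sub_mul, Matrix.mul_sub, ← Matrix.mul_assoc, hGjQ, hQG, Matrix.mul_one,
        Matrix.one_mul]
    have hQGm : Q * G = G - 1 := by
      have := hQG
      rw [Matrix.sub_mul, Matrix.one_mul] at this
      linear_combination (norm := abel) -this
    have hres : ∀ x y, G x y = Gj x y + Gj x j * (G j y - (1 : Matrix (Fin n) (Fin n) ℝ) j y) := by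
      intro x y
      have h2 : (G - Gj) x y = Gj x j * ((Q * G) j y) := by
        rw [hresM, Matrix.mul_apply]
        rw [Finset.sum_eq_single j]
        · congr 1
          rw [Matrix.mul_apply, Matrix.mul_apply]
          refine Finset.sum_congr rfl fun v _ => ?_
          rw [Matrix.sub_apply, hQjapp]
          simp
        · intro u _ hu
          have : ((Q - Qj) * G) u y = 0 := by
            rw [Matrix.mul_apply]
            apply Finset.sum_eq_zero
            intro v _
            rw [Matrix.sub_apply, hQjapp]
            simp [hu]
          rw [this, mul_zero]
        · intro h'; exact absurd (Finset.mem_univ j) h'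
      rw [Matrix.sub_apply] at h2
      rw [hQGm, Matrix.sub_apply] at h2
      linarith
    have hGij : G i j = Gj i j * G j j := by
      have := hres i j
      simp [Matrix.one_apply] at this
      linarith [this]
    have hGjjpos : 0 < G j j := lt_of_lt_of_le one_pos (hGjj j)
    by_cases hkj : k = j
    · subst hkj
      refine ⟨le_of_eq (by ring), ?_⟩
      constructor
      · intro _ p _ _ hl
        have hne : p ≠ [] := by rintro rfl; simp at hl
        exact List.mem_of_getLast? hl
      · intro _; ring
    · -- k ≠ j
      have hGik : G i k = Gj i k + Gj i j * G j k := by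
        have := hres i k
        rw [Matrix.one_apply_ne' hkj] at this
        -- careful: (1) j k = 0 since j ≠ k
        linarith [this]
      have hkey : G i k * G j j - G i j * G j k = Gj i k * G j j := by
        rw [hGij, hGik]; ring
      refine ⟨by nlinarith [hGjnn i k, hGjjpos], ?_⟩
      have heq : G i j * G j k = G i k * G j j ↔ Gj i k = 0 := by
        constructor
        · intro h'
          have : Gj i k * G j j = 0 := by linarith
          rcases mul_eq_zero.mp this with h'' | h''
          · exact h''
          · exact absurd h'' hGjjpos.ne'
        · intro h'; rw [h'] at hkey; nlinarith
      rw [heq]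
      -- Gj i k = 0 ↔ every W-path from i to k visits j
      have hzero_iff : Gj i k = 0 ↔ ¬ ∃ m, 0 < (Qj ^ m) i k := by
        constructor
        · intro h'
          rintro ⟨m, hm⟩
          have := le_hasSum (hGjsum i k) m fun m' _ => pow_entry_nonneg hQjnn m' i k
          rw [h'] at this
          exact absurd (lt_of_lt_of_le hm this) (lt_irrefl 0)
        · intro h'
          push_neg at h'
          have hz : ∀ m, (Qj ^ m) i k = 0 := fun m =>
            le_antisymm (h' m) (pow_entry_nonneg hQjnn m i k)
          have : HasSum (fun m : ℕ => (Qj ^ m) i k) 0 := by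
            rw [show (fun m : ℕ => (Qj ^ m) i k) = fun _ => (0:ℝ) from funext hz]
            exact hasSum_zero
          exact (hGjsum i k).unique this
      rw [hzero_iff, exists_walk_iff hQjnn]
      -- translate Qj-paths into W-paths avoiding j
      have htrans : (∃ p : List (Fin n), p.Chain' (fun u v => 0 < Qj u v) ∧
          p.head? = some i ∧ p.getLast? = some k) ↔
          ∃ p : List (Fin n), p.Chain' (fun u v => 0 < W u v) ∧
          p.head? = some i ∧ p.getLast? = some k ∧ j ∉ p := by
        constructor
        · rintro ⟨p, hc, hh, hl⟩
          have hWc : p.Chain' (fun u v => 0 < W u v) := by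
            apply List.IsChain.imp _ hc
            intro u v h'
            rw [hQjapp] at h'
            split at h'
            · exact absurd h' (lt_irrefl 0)
            · exact (hQpos u v).mp h'
          have hnm : j ∉ p := by
            refine not_mem_of_chain' (j := j) (k := k) ?_ hkj p hc hl
            intro v
            rw [hQjapp]
            simp
          exact ⟨p, hWc, hh, hl, hnm⟩
        · rintro ⟨p, hc, hh, hl, hnm⟩
          refine ⟨p, ?_, hh, hl⟩
          apply chain'_of_chain' p _ hc
          intro u hu v _ h'
          rw [hQjapp]
          rw [if_neg (by rintro rfl; exact hnm hu)]
          exact (hQpos u v).mpr h'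
      rw [htrans]
      push_neg
      tauto

end TMaux

/-- Let `W` be the adjacency matrix of a connected weighted graph
(symmetric, nonnegative, zero diagonal, positive row sums `d`), `D = Diag(W·1)`,
`L = D − W`, `P = D⁻¹W`, `t > 0`, `0 < α < 1`, and `A = Diag(a)` with `a` positive.
Then each of `(tA + L)⁻¹`, `(I − αP)⁻¹` and `(D − αW)⁻¹` has positive entries and
produces a transitional measure on the graph. -/
theorem transitional_measure_kernels {n : ℕ} (W : Matrix (Fin n) (Fin n) ℝ)
    (hW_symm : W.IsSymm) (hW_nonneg : ∀ i j : Fin n, 0 ≤ W i j)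
    (hW_diag : ∀ i : Fin n, W i i = 0)
    (d : Fin n → ℝ) (hd : ∀ i : Fin n, d i = ∑ j : Fin n, W i j)
    (hd_pos : ∀ i : Fin n, 0 < d i)
    (hconn : ∀ i k : Fin n, ∃ p : List (Fin n),
      p.Chain' (fun u v => 0 < W u v) ∧ p.head? = some i ∧ p.getLast? = some k)
    (D L P : Matrix (Fin n) (Fin n) ℝ)
    (hD : D = Matrix.diagonal d) (hL : L = D - W) (hP : P = D⁻¹ * W)
    (t : ℝ) (ht : 0 < t) (α : ℝ) (hα0 : 0 < α) (hα1 : α < 1)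
    (a : Fin n → ℝ) (ha : ∀ i, 0 < a i) :
    ProducesTransitionalMeasure W (t • Matrix.diagonal a + L)⁻¹ ∧
    ProducesTransitionalMeasure W (1 - α • P)⁻¹ ∧
    ProducesTransitionalMeasure W (D - α • W)⁻¹ := by
  classical
  subst hD hL hP
  -- the third kernel
  have hptm3 : ProducesTransitionalMeasure W (Matrix.diagonal d - α • W)⁻¹ := by
    refine TMaux.core_ptm W (α • W) ?_ ?_ d hd_pos ?_ hconn
    · intro u v
      have happ : (α • W) u v = α * W u v := rfl
      rw [happ]
      constructor
      · intro h'
        by_contra hw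
        have : W u v = 0 := le_antisymm (not_lt.mp hw) (hW_nonneg u v)
        rw [this, mul_zero] at h'
        exact lt_irrefl 0 h'
      · intro h'; exact mul_pos hα0 h'
    · intro u v; exact mul_nonneg hα0.le (hW_nonneg u v)
    · intro i
      have happ : ∀ v, (α • W) i v = α * W i v := fun v => rfl
      have : ∑ v, (α • W) i v = α * d i := by
        rw [hd i, Finset.mul_sum]
        exact Finset.sum_congr rfl fun v _ => happ v
      rw [this]
      nlinarith [hd_pos i]
  -- the first kernel
  have hptm1 : ProducesTransitionalMeasure W
      (t • Matrix.diagonal a + (Matrix.diagonal d - W))⁻¹ := by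
    have h1 : t • Matrix.diagonal a + (Matrix.diagonal d - W)
        = Matrix.diagonal (fun i => t * a i + d i) - W := by
      ext u v
      by_cases h' : u = v <;>
        simp [Matrix.diagonal_apply, h', Matrix.sub_apply, Matrix.add_apply,
          Matrix.smul_apply, smul_eq_mul] <;> ring
    rw [h1]
    refine TMaux.core_ptm W W (fun u v => Iff.rfl) hW_nonneg _ ?_ ?_ hconn
    · intro i; have := ha i; have := hd_pos i; nlinarith
    · intro i
      rw [← hd i]
      nlinarith [ht, ha i, hd_pos i]
  -- the second kernel
  have hDinv : (Matrix.diagonal d)⁻¹ = Matrix.diagonal fun i => (d i)⁻¹ := by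
    apply Matrix.inv_eq_right_inv
    rw [Matrix.diagonal_mul_diagonal]
    have h2 : (fun i => d i * (d i)⁻¹) = fun _ => (1:ℝ) :=
      funext fun i => mul_inv_cancel₀ (hd_pos i).ne'
    rw [h2, Matrix.diagonal_one]
  have hfact : (1 : Matrix (Fin n) (Fin n) ℝ) - α • ((Matrix.diagonal d)⁻¹ * W)
      = (Matrix.diagonal d)⁻¹ * (Matrix.diagonal d - α • W) := by
    rw [Matrix.mul_sub, Matrix.mul_smul, hDinv, Matrix.diagonal_mul_diagonal]
    have h2 : (fun i => (d i)⁻¹ * d i) = fun _ => (1:ℝ) :=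
      funext fun i => inv_mul_cancel₀ (hd_pos i).ne'
    rw [h2, Matrix.diagonal_one]
  have hinvinv : ((Matrix.diagonal d)⁻¹)⁻¹ = Matrix.diagonal d := by
    rw [hDinv]
    apply Matrix.inv_eq_right_inv
    rw [Matrix.diagonal_mul_diagonal]
    have h2 : (fun i => (d i)⁻¹ * d i) = fun _ => (1:ℝ) :=
      funext fun i => inv_mul_cancel₀ (hd_pos i).ne'
    rw [h2, Matrix.diagonal_one]
  have hS2 : (1 - α • ((Matrix.diagonal d)⁻¹ * W))⁻¹
      = (Matrix.diagonal d - α • W)⁻¹ * Matrix.diagonal d := by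
    rw [hfact, Matrix.mul_inv_rev, hinvinv]
  refine ⟨hptm1, ?_, hptm3⟩
  rw [hS2]
  exact TMaux.ptm_mul_diag d hd_pos hptm3
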